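/- Let η ≠ -1 and let A be a primitive PC(η)-axial algebra with weight homomorphism w : A → F (the algebra homomorphism given by w(x) = (a,x) for any primitive axis a, where (·,·) is the Frobenius form with (a,a) = 1 on primitive axes). Then for all x, y, z ∈ A: x(yz) + y(xz) + z(xy) = (η+1)·(w(x)·yz + w(y)·xz + w(z)·xy) - η·(w(yz)·x + w(xz)·y + w(xy)·z). In particular, if char F ≠ 3, then (x·x)·x = (η+1)·w(x)·(x·x) - η·w(x)²·x for all x ∈ A, i.e. A is a train algebra of rank 3. -/
import Mathlib


open Submodule

variable {F : Type*} [Field F] {A : Type*} [NonUnitalNonAssocCommRing A]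
  [Module F A] [SMulCommClass F A A] [IsScalarTower F A A]

variable (F) in
/-- The `lam`-eigenspace of the adjoint map of `a`. -/
def PCeig (a : A) (lam : F) : Submodule F A where
  carrier := {x : A | a * x = lam • x}
  add_mem' := by
    intro x y hx hy
    simp only [Set.mem_setOf_eq] at hx hy ⊢
    rw [mul_add, hx, hy, smul_add]
  zero_mem' := by simp
  smul_mem' := by
    intro c x hx
    simp only [Set.mem_setOf_eq] at hx ⊢
    rw [mul_smul_comm, hx, smul_smul, smul_smul, mul_comm]

variable (F) in
/-- The fusion law `PC(η)` for an idempotent (axis) `a`. -/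
structure IsPCAxis (η : F) (a : A) : Prop where
  idem : a * a = a
  decomp : PCeig F a 1 ⊔ PCeig F a η ⊔ PCeig F a (1/2 : F) = ⊤
  fus11 : ∀ x ∈ PCeig F a 1, ∀ y ∈ PCeig F a 1, x * y ∈ PCeig F a 1
  fus1e : ∀ x ∈ PCeig F a 1, ∀ y ∈ PCeig F a η, x * y ∈ PCeig F a η
  fus1h : ∀ x ∈ PCeig F a 1, ∀ y ∈ PCeig F a (1/2 : F), x * y ∈ PCeig F a (1/2 : F)
  fusee : ∀ x ∈ PCeig F a η, ∀ y ∈ PCeig F a η, x * y ∈ PCeig F a 1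
  fuseh : ∀ x ∈ PCeig F a η, ∀ y ∈ PCeig F a (1/2 : F), x * y ∈ PCeig F a (1/2 : F)
  fushh : ∀ x ∈ PCeig F a (1/2 : F), ∀ y ∈ PCeig F a (1/2 : F),
    x * y ∈ PCeig F a 1 ⊔ PCeig F a η

variable (F) in
/-- A primitive axis: an axis with `A_1(a) = F·a` (one-dimensional). -/
def IsPrimPCAxis (η : F) (a : A) : Prop :=
  IsPCAxis F η a ∧ a ≠ 0 ∧ PCeig F a 1 = Submodule.span F {a}

variable (F A) in
/-- A `PC(η)`-axial algebra: generated, as a non-unital algebra, by a (nonempty) set of axes. -/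
def IsPCAxialAlgebra (η : F) : Prop :=
  ∃ X : Set A, X.Nonempty ∧ (∀ a ∈ X, IsPCAxis F η a) ∧
    NonUnitalAlgebra.adjoin F X = ⊤

variable (F A) in
/-- A primitive `PC(η)`-axial algebra: generated by a (nonempty) set of primitive axes. -/
def IsPrimPCAxialAlgebra (η : F) : Prop :=
  ∃ X : Set A, X.Nonempty ∧ (∀ a ∈ X, IsPrimPCAxis F η a) ∧
    NonUnitalAlgebra.adjoin F X = ⊤

-- ==== auxiliary development ====
set_option linter.unusedSectionVars false
namespace S17A

lemma mem_PCeig {c x : A} {lam : F} : x ∈ PCeig F c lam ↔ c * x = lam • x := Iff.rfl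

variable (F A) in
structure Ctx (η : F) where
  B : A →ₗ[F] A →ₗ[F] F
  w : A →ₗ[F] F
  h2 : (2 : F) ≠ 0
  hη1 : η ≠ 1
  hηh : η ≠ 1 / 2
  hBsymm : ∀ x y : A, B x y = B y x
  hBfrob : ∀ x y z : A, B (x * y) z = B x (y * z)
  hBnorm : ∀ a : A, IsPrimPCAxis F η a → B a a = 1
  hw : ∀ a : A, IsPrimPCAxis F η a → ∀ x : A, w x = B a x
  X : Set A
  a₀ : A
  ha₀ : a₀ ∈ X
  hX : ∀ a ∈ X, IsPrimPCAxis F η a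
  hgen : NonUnitalAlgebra.adjoin F X = ⊤

variable {η : F}

lemma half_ne_one (h2 : (2:F) ≠ 0) : (1/2 : F) ≠ 1 := by
  intro h
  have h1 : (2:F) * (1/2) = 2 * 1 := by rw [h]
  rw [mul_one_div_cancel h2, mul_one] at h1
  exact one_ne_zero (α := F) (by linear_combination -h1)

lemma Ctx.wAxis (K : Ctx F A η) {c : A} (hc : IsPrimPCAxis F η c) : K.w c = 1 := by
  rw [K.hw c hc c]; exact K.hBnorm c hc

lemma Ctx.Borth (K : Ctx F A η) {c : A} (hcc : c * c = c) {lam : F} (hlam : lam ≠ 1)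
    {x : A} (hx : c * x = lam • x) : K.B c x = 0 := by
  have h := K.hBfrob c c x
  rw [hcc, hx, map_smul, smul_eq_mul] at h
  have h2 : (1 - lam) * K.B c x = 0 := by linear_combination h
  rcases mul_eq_zero.mp h2 with h3 | h3
  · exact absurd (sub_eq_zero.mp h3).symm hlam
  · exact h3

lemma Ctx.wEigE (K : Ctx F A η) {c : A} (hc : IsPrimPCAxis F η c)
    {x : A} (hx : x ∈ PCeig F c η) : K.w x = 0 := by
  rw [K.hw c hc x]; exact K.Borth hc.1.idem K.hη1 hx

lemma Ctx.wEigH (K : Ctx F A η) {c : A} (hc : IsPrimPCAxis F η c)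
    {x : A} (hx : x ∈ PCeig F c (1/2 : F)) : K.w x = 0 := by
  rw [K.hw c hc x]; exact K.Borth hc.1.idem (half_ne_one K.h2) hx

lemma Ctx.wxa (K : Ctx F A η) (x : A) : K.w (x * K.a₀) = K.w x := by
  have ha := K.hX K.a₀ K.ha₀
  rw [K.hw K.a₀ ha (x * K.a₀), K.hBsymm, K.hBfrob, ha.1.idem, K.hBsymm, ← K.hw K.a₀ ha x]

lemma Ctx.Bww (K : Ctx F A η) (p x : A) : K.B p x = K.w p * K.w x := by
  have ha := K.hX K.a₀ K.ha₀
  have hp : p ∈ NonUnitalAlgebra.adjoin F K.X := K.hgen ▸ trivial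
  induction hp using NonUnitalAlgebra.adjoin_induction generalizing x with
  | mem b hb =>
      rw [show K.w b = 1 from K.wAxis (K.hX b hb), one_mul, ← K.hw b (K.hX b hb) x]
  | add p q _ _ hp hq => rw [map_add, LinearMap.add_apply, map_add, add_mul, hp x, hq x]
  | zero => rw [map_zero, LinearMap.zero_apply, map_zero, zero_mul]
  | smul r p _ hp =>
      rw [map_smul, LinearMap.smul_apply, map_smul, smul_eq_mul, smul_eq_mul, hp x, mul_assoc]
  | mul p q _ _ hp hq =>
      have h2 : K.w (q * x) = K.w q * K.w x := by
        rw [K.hw K.a₀ ha (q * x), K.hBsymm, K.hBfrob, hq (x * K.a₀), K.wxa]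
      have h3 : K.w (p * q) = K.w p * K.w q := by
        rw [K.hw K.a₀ ha (p * q), K.hBsymm, K.hBfrob, hp (q * K.a₀), K.wxa]
      rw [K.hBfrob, hp (q * x), h2, h3, mul_assoc]

lemma Ctx.wmul (K : Ctx F A η) (x y : A) : K.w (x * y) = K.w x * K.w y := by
  have ha := K.hX K.a₀ K.ha₀
  rw [K.hw K.a₀ ha (x * y), K.hBsymm, K.hBfrob, K.Bww, K.wxa]

lemma Ctx.ee (K : Ctx F A η) {c : A} (hc : IsPrimPCAxis F η c)
    {e f : A} (he : e ∈ PCeig F c η) (hf : f ∈ PCeig F c η) : e * f = 0 := by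
  have h1 : e * f ∈ PCeig F c 1 := hc.1.fusee e he f hf
  rw [hc.2.2] at h1
  obtain ⟨β, hβ⟩ := Submodule.mem_span_singleton.mp h1
  have h2 : K.w (e * f) = 0 := by rw [K.wmul, K.wEigE hc he, zero_mul]
  rw [← hβ, map_smul, smul_eq_mul, K.wAxis hc, mul_one] at h2
  rw [← hβ, h2, zero_smul]

lemma Ctx.hk (K : Ctx F A η) {c : A} (hc : IsPrimPCAxis F η c)
    {h k : A} (hh : h ∈ PCeig F c (1/2 : F)) (hk : k ∈ PCeig F c (1/2 : F)) :
    h * k ∈ PCeig F c η := by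
  have h1 : h * k ∈ PCeig F c 1 ⊔ PCeig F c η := hc.1.fushh h hh k hk
  obtain ⟨p, hp, q, hq, hsum⟩ := Submodule.mem_sup.mp h1
  rw [hc.2.2] at hp
  obtain ⟨β, hβ⟩ := Submodule.mem_span_singleton.mp hp
  have h2 : K.w (h * k) = 0 := by rw [K.wmul, K.wEigH hc hh, zero_mul]
  rw [← hsum, ← hβ, map_add, map_smul, smul_eq_mul, K.wAxis hc, mul_one,
    K.wEigE hc hq, add_zero] at h2
  have : h * k = q := by rw [← hsum, ← hβ, h2, zero_smul, zero_add]
  rw [this]; exact hq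

lemma Ctx.axisMain (K : Ctx F A η) {c : A} (hc : IsPrimPCAxis F η c) (y z : A) :
    c * (y * z) + y * (c * z) + z * (c * y) =
      (η + 1) • (K.w c • (y * z) + K.w y • (c * z) + K.w z • (c * y)) -
        η • (K.w (y * z) • c + K.w (c * z) • y + K.w (c * y) • z) := by
  have hy : y ∈ (PCeig F c 1 ⊔ PCeig F c η) ⊔ PCeig F c (1/2 : F) := by
    rw [hc.1.decomp]; trivial
  have hz : z ∈ (PCeig F c 1 ⊔ PCeig F c η) ⊔ PCeig F c (1/2 : F) := by
    rw [hc.1.decomp]; trivial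
  obtain ⟨u, hu, h, hh, hysum⟩ := Submodule.mem_sup.mp hy
  obtain ⟨p, hp, e, he, husum⟩ := Submodule.mem_sup.mp hu
  rw [hc.2.2] at hp
  obtain ⟨β, hβ⟩ := Submodule.mem_span_singleton.mp hp
  obtain ⟨v, hv, k, hk, hzsum⟩ := Submodule.mem_sup.mp hz
  obtain ⟨q, hq, f, hf, hvsum⟩ := Submodule.mem_sup.mp hv
  rw [hc.2.2] at hq
  obtain ⟨γ, hγ⟩ := Submodule.mem_span_singleton.mp hq
  subst hysum husum hβ hzsum hvsum hγ
  have hcc : c * c = c := hc.1.idem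
  have hce : c * e = η • e := he
  have hcf : c * f = η • f := hf
  have hch : c * h = (1/2 : F) • h := hh
  have hck : c * k = (1/2 : F) • k := hk
  have hef : e * f = 0 := K.ee hc he hf
  have hcek : c * (e * k) = (1/2 : F) • (e * k) := hc.1.fuseh e he k hk
  have hcfh : c * (f * h) = (1/2 : F) • (f * h) := hc.1.fuseh f hf h hh
  have hchk : c * (h * k) = η • (h * k) := K.hk hc hh hk
  have hec : e * c = η • e := by rw [mul_comm]; exact hce
  have hfc : f * c = η • f := by rw [mul_comm]; exact hcf
  have hhc : h * c = (1/2 : F) • h := by rw [mul_comm]; exact hch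
  have hkc : k * c = (1/2 : F) • k := by rw [mul_comm]; exact hck
  have hfe : f * e = 0 := by rw [mul_comm]; exact hef
  have hke : k * e = e * k := mul_comm k e
  have hhf : h * f = f * h := mul_comm h f
  have hkh : k * h = h * k := mul_comm k h
  have wc : K.w c = 1 := K.wAxis hc
  have we : K.w e = 0 := K.wEigE hc he
  have wf : K.w f = 0 := K.wEigE hc hf
  have wh : K.w h = 0 := K.wEigH hc hh
  have wk : K.w k = 0 := K.wEigH hc hk
  simp only [mul_add, add_mul, smul_mul_assoc, mul_smul_comm, K.wmul, map_add, map_smul,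
    smul_eq_mul, wc, we, wf, wh, wk, hcc, hce, hcf, hch, hck, hec, hfc, hhc, hkc, hef, hfe,
    hke, hhf, hkh, hcek, hcfh, hchk, mul_zero, zero_mul, mul_one, one_mul, smul_zero,
    zero_smul, add_zero, zero_add, smul_smul, smul_add]
  have h2 := K.h2
  match_scalars <;> field_simp <;> ring

lemma Ctx.axisMulMem (K : Ctx F A η) {c d : A} (hc : IsPrimPCAxis F η c)
    (hd : IsPrimPCAxis F η d) :
    c * d ∈ Submodule.span F {t : A | IsPrimPCAxis F η t} := by
  set U : Submodule F A := PCeig F c 1 ⊔ PCeig F c η with hUdef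
  set W : Submodule F A := PCeig F c (1/2 : F) with hWdef
  have h2 := K.h2
  have hη1 := K.hη1
  have hηh := K.hηh
  -- multiplication rules between U and W
  have mulUU : ∀ u ∈ U, ∀ u' ∈ U, u * u' ∈ U := by
    intro u hu u' hu'
    obtain ⟨p, hp, e, he, rfl⟩ := Submodule.mem_sup.mp hu
    obtain ⟨p', hp', e', he', rfl⟩ := Submodule.mem_sup.mp hu'
    have m1 : p * p' ∈ U := le_sup_left (a := PCeig F c 1) (b := PCeig F c η)
      (hc.1.fus11 p hp p' hp')
    have m2 : p * e' ∈ U := le_sup_right (a := PCeig F c 1) (b := PCeig F c η)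
      (hc.1.fus1e p hp e' he')
    have m3 : e * p' ∈ U := by
      rw [mul_comm]
      exact le_sup_right (a := PCeig F c 1) (b := PCeig F c η) (hc.1.fus1e p' hp' e he)
    have m4 : e * e' ∈ U := le_sup_left (a := PCeig F c 1) (b := PCeig F c η)
      (hc.1.fusee e he e' he')
    have : (p + e) * (p' + e') = p * p' + p * e' + e * p' + e * e' := by
      rw [add_mul, mul_add, mul_add]; abel
    rw [this]
    exact add_mem (add_mem (add_mem m1 m2) m3) m4
  have mulUW : ∀ u ∈ U, ∀ x ∈ W, u * x ∈ W := by
    intro u hu x hx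
    obtain ⟨p, hp, e, he, rfl⟩ := Submodule.mem_sup.mp hu
    rw [add_mul]
    exact add_mem (hc.1.fus1h p hp x hx) (hc.1.fuseh e he x hx)
  have mulWW : ∀ x ∈ W, ∀ x' ∈ W, x * x' ∈ U := fun x hx x' hx' => hc.1.fushh x hx x' hx'
  -- complementarity
  have hsup : U ⊔ W = ⊤ := hc.1.decomp
  have hdisj : Disjoint U W := by
    rw [Submodule.disjoint_def]
    intro x hxU hxW
    obtain ⟨p, hp, q, hq, rfl⟩ := Submodule.mem_sup.mp hxU
    have hp' : c * p = p := by have := mem_PCeig.mp hp; rwa [one_smul] at this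
    have hq' : c * q = η • q := mem_PCeig.mp hq
    have hx : c * (p + q) = (1/2 : F) • (p + q) := mem_PCeig.mp hxW
    rw [mul_add, hp', hq'] at hx
    have hhalf : (2:F) * (1/2) = 1 := mul_one_div_cancel h2
    have hx2 : (2:F) • p + (2*η) • q = p + q := by
      calc (2:F) • p + (2*η) • q = (2:F) • (p + η • q) := by module
        _ = (2:F) • ((1/2 : F) • (p + q)) := by rw [hx]
        _ = ((2:F) * (1/2 : F)) • (p + q) := (smul_smul _ _ _)
        _ = p + q := by rw [hhalf, one_smul]
    have E2 : p = (1 - 2*η) • q := by linear_combination (norm := module) hx2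
    have hpη : p ∈ PCeig F c η := by rw [E2]; exact Submodule.smul_mem _ _ hq
    have hpp : c * p = η • p := mem_PCeig.mp hpη
    have hp0 : (1 - η) • p = 0 := by linear_combination (norm := module) hpp - hp'
    have hp00 : p = 0 := by
      rcases smul_eq_zero.mp hp0 with h' | h'
      · exact absurd (by linear_combination h' : (1:F) = η).symm hη1
      · exact h'
    have hq0 : q = 0 := by
      rw [hp00] at E2
      rcases smul_eq_zero.mp E2.symm with h' | h'
      · exfalso
        apply hηh
        have hη2 : (2:F) * η = 1 := by linear_combination -h'
        field_simp
        linear_combination hη2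
      · exact h'
    rw [hp00, hq0, add_zero]
  have hcompl : IsCompl U W := ⟨hdisj, codisjoint_iff.mpr hsup⟩
  -- the Miyamoto involution
  set π := Submodule.linearProjOfIsCompl U W hcompl with hπ
  set τ : A →ₗ[F] A := (2:F) • (U.subtype.comp π) - LinearMap.id with hτ
  have tau_u : ∀ u ∈ U, τ u = u := by
    intro u hu
    have : π u = ⟨u, hu⟩ := Submodule.linearProjOfIsCompl_apply_left hcompl ⟨u, hu⟩
    simp only [hτ, LinearMap.sub_apply, LinearMap.smul_apply, LinearMap.comp_apply,
      LinearMap.id_apply, this, Submodule.subtype_apply]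
    module
  have tau_w : ∀ x ∈ W, τ x = -x := by
    intro x hx
    have : π x = 0 := Submodule.linearProjOfIsCompl_apply_right hcompl ⟨x, hx⟩
    simp only [hτ, LinearMap.sub_apply, LinearMap.smul_apply, LinearMap.comp_apply,
      LinearMap.id_apply, this, Submodule.subtype_apply, map_zero, ZeroMemClass.coe_zero,
      smul_zero]
    module
  have tau_uw : ∀ u ∈ U, ∀ x ∈ W, τ (u + x) = u - x := by
    intro u hu x hx
    rw [map_add, tau_u u hu, tau_w x hx, sub_eq_add_neg]
  have decompose : ∀ x : A, ∃ u ∈ U, ∃ v ∈ W, x = u + v := by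
    intro x
    have hx : x ∈ U ⊔ W := by rw [hsup]; trivial
    obtain ⟨u, hu, v, hv, hsum⟩ := Submodule.mem_sup.mp hx
    exact ⟨u, hu, v, hv, hsum.symm⟩
  have tau_mul : ∀ x y : A, τ (x * y) = τ x * τ y := by
    intro x y
    obtain ⟨u, hu, v, hv, rfl⟩ := decompose x
    obtain ⟨u', hu', v', hv', rfl⟩ := decompose y
    have expand : (u + v) * (u' + v') = (u * u' + v * v') + (u * v' + v * u') := by
      rw [add_mul, mul_add, mul_add]; abel
    have m1 : u * u' + v * v' ∈ U := add_mem (mulUU u hu u' hu') (mulWW v hv v' hv')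
    have m2 : u * v' + v * u' ∈ W := by
      refine add_mem (mulUW u hu v' hv') ?_
      rw [mul_comm]; exact mulUW u' hu' v hv
    rw [expand, tau_uw _ m1 _ m2, tau_uw _ hu _ hv, tau_uw _ hu' _ hv']
    rw [sub_mul, mul_sub, mul_sub]; abel
  have tau_invol : ∀ x : A, τ (τ x) = x := by
    intro x
    obtain ⟨u, hu, v, hv, rfl⟩ := decompose x
    rw [tau_uw u hu v hv, sub_eq_add_neg, map_add, tau_u u hu, map_neg, tau_w v hv, neg_neg]
  -- τ d is a primitive axis
  have tau_eig : ∀ (b : A) (lam : F) (x : A), x ∈ PCeig F b lam → τ x ∈ PCeig F (τ b) lam := by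
    intro b lam x hx
    have : τ b * τ x = lam • τ x := by
      rw [← tau_mul, mem_PCeig.mp hx, map_smul]
    exact this
  have tau_eig_eq : ∀ (b : A) (lam : F),
      PCeig F (τ b) lam = Submodule.map τ (PCeig F b lam) := by
    intro b lam
    apply le_antisymm
    · intro x hx
      have h1 : τ x ∈ PCeig F (τ (τ b)) lam := tau_eig (τ b) lam x hx
      rw [tau_invol b] at h1
      exact ⟨τ x, h1, tau_invol x⟩
    · rintro x ⟨x', hx', rfl⟩
      exact tau_eig b lam x' hx'
  have tau_surj : Function.Surjective τ := fun x => ⟨τ x, tau_invol x⟩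
  have tau_map_top : Submodule.map τ (⊤ : Submodule F A) = ⊤ := by
    rw [Submodule.map_top, LinearMap.range_eq_top]
    exact tau_surj
  have tau_axis : ∀ b : A, IsPrimPCAxis F η b → IsPrimPCAxis F η (τ b) := by
    intro b hb
    refine ⟨⟨?_, ?_, ?_, ?_, ?_, ?_, ?_, ?_⟩, ?_, ?_⟩
    · rw [← tau_mul, hb.1.idem]
    · rw [tau_eig_eq, tau_eig_eq, tau_eig_eq, ← Submodule.map_sup, ← Submodule.map_sup,
        hb.1.decomp, tau_map_top]
    · intro x hx y hy
      rw [tau_eig_eq] at hx hy ⊢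
      obtain ⟨x', hx', rfl⟩ := hx
      obtain ⟨y', hy', rfl⟩ := hy
      exact ⟨x' * y', hb.1.fus11 x' hx' y' hy', tau_mul x' y'⟩
    · intro x hx y hy
      rw [tau_eig_eq] at hx hy ⊢
      obtain ⟨x', hx', rfl⟩ := hx
      obtain ⟨y', hy', rfl⟩ := hy
      exact ⟨x' * y', hb.1.fus1e x' hx' y' hy', tau_mul x' y'⟩
    · intro x hx y hy
      rw [tau_eig_eq] at hx hy ⊢
      obtain ⟨x', hx', rfl⟩ := hx
      obtain ⟨y', hy', rfl⟩ := hy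
      exact ⟨x' * y', hb.1.fus1h x' hx' y' hy', tau_mul x' y'⟩
    · intro x hx y hy
      rw [tau_eig_eq] at hx hy ⊢
      obtain ⟨x', hx', rfl⟩ := hx
      obtain ⟨y', hy', rfl⟩ := hy
      exact ⟨x' * y', hb.1.fusee x' hx' y' hy', tau_mul x' y'⟩
    · intro x hx y hy
      rw [tau_eig_eq] at hx hy ⊢
      obtain ⟨x', hx', rfl⟩ := hx
      obtain ⟨y', hy', rfl⟩ := hy
      exact ⟨x' * y', hb.1.fuseh x' hx' y' hy', tau_mul x' y'⟩
    · intro x hx y hy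
      rw [tau_eig_eq] at hx hy
      obtain ⟨x', hx', rfl⟩ := hx
      obtain ⟨y', hy', rfl⟩ := hy
      rw [tau_eig_eq, tau_eig_eq, ← Submodule.map_sup]
      exact ⟨x' * y', hb.1.fushh x' hx' y' hy', tau_mul x' y'⟩
    · intro h0
      exact hb.2.1 (by rw [← tau_invol b, h0, map_zero])
    · rw [tau_eig_eq, hb.2.2, Submodule.map_span, Set.image_singleton]
  -- decompose d with respect to c
  have hdmem : d ∈ U ⊔ W := by rw [hsup]; trivial
  obtain ⟨u, hu, h, hh, hdsum⟩ := Submodule.mem_sup.mp hdmem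
  obtain ⟨p, hp, e, he, husum⟩ := Submodule.mem_sup.mp hu
  rw [hc.2.2] at hp
  obtain ⟨β, hβ⟩ := Submodule.mem_span_singleton.mp hp
  have hdd : d = (β • c + e) + h := by rw [hβ, husum, hdsum]
  have hβ1 : β = 1 := by
    have h1 : K.w d = 1 := K.wAxis hd
    rw [hdd, map_add, map_add, map_smul, smul_eq_mul, K.wAxis hc, mul_one,
      K.wEigE hc he, K.wEigH hc hh, add_zero, add_zero] at h1
    exact h1
  rw [hβ1, one_smul] at hdd
  have hce : c * e = η • e := mem_PCeig.mp he
  have hch : c * h = (1/2 : F) • h := mem_PCeig.mp hh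
  have hcmem : c ∈ PCeig F c 1 := by
    rw [mem_PCeig, hc.1.idem, one_smul]
  have hcU : c + e ∈ U := add_mem (le_sup_left (a := PCeig F c 1) (b := PCeig F c η) hcmem)
    (le_sup_right (a := PCeig F c 1) (b := PCeig F c η) he)
  have htau_d : τ d = (c + e) - h := by rw [hdd, tau_uw _ hcU _ hh]
  have hhalf : (2:F) * (1/2) = 1 := mul_one_div_cancel h2
  have ch2 : (2:F) • (c * h) = h := by rw [hch, smul_smul, hhalf, one_smul]
  have hcd2 : (2:F) • (c * d) = (2:F) • c + (2*η) • e + h := by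
    rw [hdd, mul_add, mul_add, hc.1.idem, hce]
    linear_combination (norm := module) ch2
  have hfinal4 : (4:F) • (c * d) = (4 - 4*η) • c + (2*η + 1) • d + (2*η - 1) • (τ d) := by
    linear_combination (norm := module) (2:F) • hcd2 - (2*η - 1) • htau_d - (2*η + 1) • hdd
  have h4 : (4:F) ≠ 0 := by
    have : (4:F) = 2 * 2 := by norm_num
    rw [this]; exact mul_ne_zero h2 h2
  have hrepr : c * d = (4:F)⁻¹ • ((4 - 4*η) • c + (2*η + 1) • d + (2*η - 1) • (τ d)) := by
    rw [← hfinal4, smul_smul, inv_mul_cancel₀ h4, one_smul]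
  rw [hrepr]
  have hcs : c ∈ {t : A | IsPrimPCAxis F η t} := hc
  have hds : d ∈ {t : A | IsPrimPCAxis F η t} := hd
  have hts : τ d ∈ {t : A | IsPrimPCAxis F η t} := tau_axis d hd
  exact Submodule.smul_mem _ _ (add_mem (add_mem
    (Submodule.smul_mem _ _ (Submodule.subset_span hcs))
    (Submodule.smul_mem _ _ (Submodule.subset_span hds)))
    (Submodule.smul_mem _ _ (Submodule.subset_span hts)))

lemma Ctx.memSpanAxes (K : Ctx F A η) (x : A) :
    x ∈ Submodule.span F {t : A | IsPrimPCAxis F η t} := by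
  have mul_axis : ∀ c : A, IsPrimPCAxis F η c →
      ∀ q ∈ Submodule.span F {t : A | IsPrimPCAxis F η t},
        c * q ∈ Submodule.span F {t : A | IsPrimPCAxis F η t} := by
    intro c hc q hq
    induction hq using Submodule.span_induction with
    | mem d hd => exact K.axisMulMem hc hd
    | zero => rw [mul_zero]; exact zero_mem _
    | add y z _ _ hy hz => rw [mul_add]; exact add_mem hy hz
    | smul r y _ hy => rw [mul_smul_comm]; exact Submodule.smul_mem _ r hy
  have mulV : ∀ p ∈ Submodule.span F {t : A | IsPrimPCAxis F η t},
      ∀ q ∈ Submodule.span F {t : A | IsPrimPCAxis F η t},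
        p * q ∈ Submodule.span F {t : A | IsPrimPCAxis F η t} := by
    intro p hp q hq
    induction hp using Submodule.span_induction with
    | mem c hcs => exact mul_axis c hcs q hq
    | zero => rw [zero_mul]; exact zero_mem _
    | add y z _ _ hy hz => rw [add_mul]; exact add_mem hy hz
    | smul r y _ hy => rw [smul_mul_assoc]; exact Submodule.smul_mem _ r hy
  have hx : x ∈ NonUnitalAlgebra.adjoin F K.X := K.hgen ▸ trivial
  induction hx using NonUnitalAlgebra.adjoin_induction with
  | mem b hb => exact Submodule.subset_span (K.hX b hb)
  | add p q _ _ hp hq => exact add_mem hp hq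
  | zero => exact zero_mem _
  | mul p q _ _ hp hq => exact mulV p hp q hq
  | smul r p _ hp => exact Submodule.smul_mem _ r hp

end S17A

/-- for `η ≠ -1` and the weight homomorphism `w` of a primitive
`PC(η)`-axial algebra:
`x(yz) + y(xz) + z(xy) = (η+1)(w(x) yz + w(y) xz + w(z) xy) - η(w(yz) x + w(xz) y + w(xy) z)`;
in particular, if `char F ≠ 3`, then `x³ = (η+1) w(x) x² - η w(x)² x`, i.e. `A` is a train
algebra of rank 3. -/
theorem stmt17 (η : F) (h2 : (2 : F) ≠ 0) (hη1 : η ≠ 1) (hηh : η ≠ 1 / 2) (hηm : η ≠ -1)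
    (hA : IsPrimPCAxialAlgebra F A η)
    (B : A →ₗ[F] A →ₗ[F] F) (hB0 : B ≠ 0)
    (hBsymm : ∀ x y : A, B x y = B y x)
    (hBfrob : ∀ x y z : A, B (x * y) z = B x (y * z))
    (hBnorm : ∀ a : A, IsPrimPCAxis F η a → B a a = 1)
    (w : A →ₗ[F] F)
    (hw : ∀ a : A, IsPrimPCAxis F η a → ∀ x : A, w x = B a x) :
    (∀ x y z : A, x * (y * z) + y * (x * z) + z * (x * y) =
      (η + 1) • (w x • (y * z) + w y • (x * z) + w z • (x * y)) -
        η • (w (y * z) • x + w (x * z) • y + w (x * y) • z)) ∧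
    ((3 : F) ≠ 0 → ∀ x : A,
      (x * x) * x = ((η + 1) * w x) • (x * x) - (η * (w x) ^ 2) • x) := by
  obtain ⟨X, ⟨a₀, ha₀⟩, hX, hgen⟩ := hA
  let K : S17A.Ctx F A η := ⟨B, w, h2, hη1, hηh, hBsymm, hBfrob, hBnorm, hw, X, a₀, ha₀, hX, hgen⟩
  have main1 : ∀ x y z : A, x * (y * z) + y * (x * z) + z * (x * y) =
      (η + 1) • (w x • (y * z) + w y • (x * z) + w z • (x * y)) -
        η • (w (y * z) • x + w (x * z) • y + w (x * y) • z) := by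
    intro x y z
    have hx := K.memSpanAxes x
    induction hx using Submodule.span_induction with
    | mem c hcs => exact K.axisMain hcs y z
    | zero =>
        simp only [zero_mul, mul_zero, map_zero, zero_smul, smul_zero, add_zero, zero_add,
          sub_zero]
    | add x₁ x₂ _ _ h1 h2 =>
        simp only [add_mul, mul_add, map_add]
        linear_combination (norm := module) h1 + h2
    | smul r x' _ h1 =>
        simp only [smul_mul_assoc, mul_smul_comm, map_smul, smul_eq_mul]
        linear_combination (norm := module) r • h1
  refine ⟨main1, ?_⟩
  intro h3 x
  have hmain := main1 x x x
  have hwmul : w (x * x) = w x * w x := K.wmul x x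
  rw [hwmul] at hmain
  have hcomm : (x * x) * x = x * (x * x) := mul_comm _ _
  have key : (3:F) • ((x * x) * x) =
      (3:F) • (((η + 1) * w x) • (x * x) - (η * (w x) ^ 2) • x) := by
    linear_combination (norm := module) hmain + (3:F) • hcomm
  exact smul_right_injective A h3 key
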